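/- Suppose the single five-term relation T_{1,0} T_{0,1} = T_{0,1} T_{1,1} T_{1,0} holds in End_K(V)[[u,v]]. Then for every integer k ≥ 1, [R(k,0), R(0,1)] = [R(1,0), R(0,1)] ∘ R(k-1,0), where [A,B] = A∘B − B∘A. -/

import Mathlib

open Classical

/-- The generating series `T_{m,n} = Σ_{k≥0} u^{mk} v^{nk} R(mk,nk)` as a formal power
series in two commuting variables `u = X 0`, `v = X 1` with coefficients in `End_K V`:
its coefficient at the monomial `u^a v^b` is `R(a,b)` if `(a,b) = (mk,nk)` for some `k`,
and `0` otherwise (for coprime `(m,n)` this is exactly the displayed sum). -/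
noncomputable def fiveTermT {K V : Type*} [Field K] [AddCommGroup V] [Module K V]
    (R : ℕ × ℕ → Module.End K V) (m n : ℕ) :
    MvPowerSeries (Fin 2) (Module.End K V) :=
  fun d => if ∃ k : ℕ, d 0 = m * k ∧ d 1 = n * k then R (d 0, d 1) else 0

section aux

variable {K V : Type*} [Field K] [AddCommGroup V] [Module K V]

private lemma myT10 (R : ℕ × ℕ → Module.End K V) (p : Fin 2 →₀ ℕ) :
    fiveTermT R 1 0 p = if p 1 = 0 then R (p 0, p 1) else 0 := by simp [fiveTermT]

private lemma myT01 (R : ℕ × ℕ → Module.End K V) (p : Fin 2 →₀ ℕ) :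
    fiveTermT R 0 1 p = if p 0 = 0 then R (p 0, p 1) else 0 := by simp [fiveTermT]

private lemma myT11 (R : ℕ × ℕ → Module.End K V) (p : Fin 2 →₀ ℕ) :
    fiveTermT R 1 1 p = if p 0 = p 1 then R (p 0, p 1) else 0 := by simp [fiveTermT, eq_comm]

private lemma mySum {α M : Type*} [AddCommMonoid M] {s : Finset α} {f : α → M} {a b : α}
    (ha : a ∈ s) (hb : b ∈ s) (hab : a ≠ b)
    (h : ∀ c ∈ s, c ≠ a → c ≠ b → f c = 0) :
    ∑ x ∈ s, f x = f a + f b := by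
  classical
  rw [← Finset.add_sum_erase _ f ha]
  congr 1
  rw [Finset.sum_eq_single_of_mem b (Finset.mem_erase.2 ⟨(Ne.symm hab), hb⟩)]
  intro c hc hcb
  exact h c (Finset.mem_of_mem_erase hc) (Finset.ne_of_mem_erase hc) hcb

private lemma finsupp_eq {p q : Fin 2 →₀ ℕ} (h0 : p 0 = q 0) (h1 : p 1 = q 1) : p = q := by
  ext i
  fin_cases i
  · exact h0
  · exact h1

private lemma midCoeff (R : ℕ × ℕ → Module.End K V) (e : Fin 2 →₀ ℕ) :
    MvPowerSeries.coeff e (fiveTermT R 0 1 * fiveTermT R 1 1)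
      = if e 0 ≤ e 1 then R (0, e 1 - e 0) * R (e 0, e 0) else 0 := by
  rw [MvPowerSeries.coeff_mul]
  by_cases h : e 0 ≤ e 1
  · rw [if_pos h]
    rw [Finset.sum_eq_single_of_mem
      ((Finsupp.single 1 (e 1 - e 0) : Fin 2 →₀ ℕ),
        (Finsupp.single 0 (e 0) + Finsupp.single 1 (e 0) : Fin 2 →₀ ℕ))]
    · rw [MvPowerSeries.coeff_apply, MvPowerSeries.coeff_apply, myT01, myT11]
      simp [Finsupp.single_apply]
    · rw [Finset.HasAntidiagonal.mem_antidiagonal]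
      apply finsupp_eq <;> simp [Finsupp.single_apply, Nat.sub_add_cancel h]
    · intro p hp hne
      rw [Finset.HasAntidiagonal.mem_antidiagonal] at hp
      have hp0 : p.1 0 + p.2 0 = e 0 := by
        rw [← Finsupp.add_apply, hp]
      have hp1 : p.1 1 + p.2 1 = e 1 := by
        rw [← Finsupp.add_apply, hp]
      rw [MvPowerSeries.coeff_apply, MvPowerSeries.coeff_apply, myT01, myT11]
      by_cases h1 : p.1 0 = 0
      · by_cases h2 : p.2 0 = p.2 1
        · exfalso
          apply hne
          have e1 : p.2 0 = e 0 := by omega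
          have e2 : p.2 1 = e 0 := by omega
          have e3 : p.1 1 = e 1 - e 0 := by omega
          refine Prod.ext ?_ ?_
          · exact finsupp_eq (by simp [h1, Finsupp.single_apply]) (by simp [e3])
          · exact finsupp_eq (by simp [e1, Finsupp.single_apply])
              (by simp [e2, Finsupp.single_apply])
        · simp [h2]
      · simp [h1]
  · rw [if_neg h]
    apply Finset.sum_eq_zero
    intro p hp
    rw [Finset.HasAntidiagonal.mem_antidiagonal] at hp
    have hp0 : p.1 0 + p.2 0 = e 0 := by rw [← Finsupp.add_apply, hp]
    have hp1 : p.1 1 + p.2 1 = e 1 := by rw [← Finsupp.add_apply, hp]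
    rw [MvPowerSeries.coeff_apply, MvPowerSeries.coeff_apply, myT01, myT11]
    by_cases h1 : p.1 0 = 0
    · by_cases h2 : p.2 0 = p.2 1
      · omega
      · simp [h2]
    · simp [h1]

private lemma key (R : ℕ × ℕ → Module.End K V) (hR : R (0, 0) = LinearMap.id)
    (h5 : fiveTermT R 1 0 * fiveTermT R 0 1
        = fiveTermT R 0 1 * fiveTermT R 1 1 * fiveTermT R 1 0)
    (k : ℕ) (hk : 1 ≤ k) :
    R (k, 0) * R (0, 1) = R (0, 1) * R (k, 0) + R (1, 1) * R (k - 1, 0) := by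
  have hR1 : R (0, 0) = 1 := hR.trans Module.End.one_eq_id.symm
  set d : Fin 2 →₀ ℕ := Finsupp.single 0 k + Finsupp.single 1 1 with hd
  have hd0 : d 0 = k := by simp [hd, Finsupp.single_apply]
  have hd1 : d 1 = 1 := by simp [hd, Finsupp.single_apply]
  have hc : MvPowerSeries.coeff d (fiveTermT R 1 0 * fiveTermT R 0 1)
      = MvPowerSeries.coeff d
          (fiveTermT R 0 1 * fiveTermT R 1 1 * fiveTermT R 1 0) := by rw [h5]
  -- LHS
  rw [MvPowerSeries.coeff_mul,
    Finset.sum_eq_single_of_mem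
      ((Finsupp.single 0 k : Fin 2 →₀ ℕ), (Finsupp.single 1 1 : Fin 2 →₀ ℕ))
      (by rw [Finset.HasAntidiagonal.mem_antidiagonal])
      (by
        intro p hp hne
        rw [Finset.HasAntidiagonal.mem_antidiagonal] at hp
        have hp0 : p.1 0 + p.2 0 = d 0 := by rw [← Finsupp.add_apply, hp]
        have hp1 : p.1 1 + p.2 1 = d 1 := by rw [← Finsupp.add_apply, hp]
        rw [hd0] at hp0; rw [hd1] at hp1
        rw [MvPowerSeries.coeff_apply, MvPowerSeries.coeff_apply, myT10, myT01]
        by_cases h1 : p.1 1 = 0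
        · by_cases h2 : p.2 0 = 0
          · exfalso
            apply hne
            refine Prod.ext ?_ ?_
            · exact finsupp_eq (by simp [Finsupp.single_apply]; omega) (by simp [h1])
            · exact finsupp_eq (by simp [h2, Finsupp.single_apply])
                (by simp [Finsupp.single_apply]; omega)
          · simp [h2]
        · simp [h1])] at hc
  rw [MvPowerSeries.coeff_apply, MvPowerSeries.coeff_apply, myT10, myT01] at hc
  simp only [Finsupp.single_apply, if_pos, if_neg] at hc
  -- RHS
  rw [MvPowerSeries.coeff_mul] at hc
  rw [mySum (a := ((Finsupp.single 1 1 : Fin 2 →₀ ℕ), (Finsupp.single 0 k : Fin 2 →₀ ℕ)))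
      (b := ((Finsupp.single 0 1 + Finsupp.single 1 1 : Fin 2 →₀ ℕ),
        (Finsupp.single 0 (k - 1) : Fin 2 →₀ ℕ)))
      (by rw [Finset.HasAntidiagonal.mem_antidiagonal]; apply finsupp_eq <;>
        simp [hd0, hd1, Finsupp.single_apply] <;> omega)
      (by rw [Finset.HasAntidiagonal.mem_antidiagonal]; apply finsupp_eq <;>
        simp [hd0, hd1, Finsupp.single_apply] <;> omega)
      (by
        intro h
        have := congrArg (fun q => q.1 0) h
        simp [Finsupp.single_apply] at this)
      (by
        intro c hcmem hca hcb
        rw [Finset.HasAntidiagonal.mem_antidiagonal] at hcmem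
        have hp0 : c.1 0 + c.2 0 = d 0 := by rw [← Finsupp.add_apply, hcmem]
        have hp1 : c.1 1 + c.2 1 = d 1 := by rw [← Finsupp.add_apply, hcmem]
        rw [hd0] at hp0; rw [hd1] at hp1
        rw [midCoeff, MvPowerSeries.coeff_apply, myT10]
        by_cases h2 : c.2 1 = 0
        · by_cases hle : c.1 0 ≤ c.1 1
          · have h11 : c.1 1 = 1 := by omega
            have hb : c.1 0 ≤ 1 := by omega
            rcases Nat.le_one_iff_eq_zero_or_eq_one.mp hb with h10 | h10
            · exfalso; apply hca
              refine Prod.ext ?_ ?_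
              · exact finsupp_eq (by simp [h10, Finsupp.single_apply]) (by simp [h11])
              · exact finsupp_eq (by simp [Finsupp.single_apply]; omega) (by simp [h2])
            · exfalso; apply hcb
              refine Prod.ext ?_ ?_
              · exact finsupp_eq (by simp [h10, Finsupp.single_apply])
                  (by simp [h11, Finsupp.single_apply])
              · exact finsupp_eq (by simp [Finsupp.single_apply]; omega) (by simp [h2])
          · simp [hle]
        · simp [h2])] at hc
  rw [midCoeff, midCoeff, MvPowerSeries.coeff_apply, MvPowerSeries.coeff_apply,
    myT10, myT10] at hc
  simp only [Finsupp.single_apply] at hc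
  simp only [if_pos, if_neg] at hc
  simpa [hR1, show R 0 = 1 from hR1, show R 1 = R (1,1) from rfl] using hc

end aux

theorem stmt_2 {K V : Type*} [Field K] [AddCommGroup V] [Module K V]
    (R : ℕ × ℕ → Module.End K V) (hR : R (0, 0) = LinearMap.id)
    (h5 : fiveTermT R 1 0 * fiveTermT R 0 1
        = fiveTermT R 0 1 * fiveTermT R 1 1 * fiveTermT R 1 0) :
    ∀ k : ℕ, 1 ≤ k →
      R (k, 0) ∘ₗ R (0, 1) - R (0, 1) ∘ₗ R (k, 0)
        = (R (1, 0) ∘ₗ R (0, 1) - R (0, 1) ∘ₗ R (1, 0)) ∘ₗ R (k - 1, 0) := by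
  intro k hk
  have hR1 : R (0, 0) = 1 := hR.trans Module.End.one_eq_id.symm
  have h1 := key R hR h5 1 le_rfl
  have hkk := key R hR h5 k hk
  simp only [Nat.sub_self, hR1, mul_one] at h1
  simp only [← Module.End.mul_eq_comp]
  rw [sub_eq_iff_eq_add'.mpr hkk, sub_eq_iff_eq_add'.mpr h1]
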